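/- The function f(x) = (1/(1+x))·(1 + {x}(1−{x})/((⌊x⌋+1)(⌊x⌋+2))) is continuous on the interval [0, ∞). -/

import Mathlib

/-- `f(x) = (1/(1+x)) · (1 + {x}(1−{x}) / ((⌊x⌋+1)(⌊x⌋+2)))`, where `⌊x⌋` is the floor of
`x` and `{x} = x − ⌊x⌋` is the fractional part of `x`. -/
noncomputable def f (x : ℝ) : ℝ :=
  (1 / (1 + x)) *
    (1 + Int.fract x * (1 - Int.fract x) / (((⌊x⌋ : ℝ) + 1) * ((⌊x⌋ : ℝ) + 2)))

/-- The local piece of `f` on `[k, k+1)`, with the floor replaced by the constant `k`. -/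
noncomputable def g (k : ℤ) (x : ℝ) : ℝ :=
  (1 / (1 + x)) *
    (1 + (x - k) * (1 - (x - k)) / (((k : ℝ) + 1) * ((k : ℝ) + 2)))

lemma f_eq_g (k : ℤ) (x : ℝ) (hx : x ∈ Set.Ico (k : ℝ) ((k : ℝ) + 1)) : f x = g k x := by
  have hf : ⌊x⌋ = k := by
    rw [Int.floor_eq_iff]
    exact ⟨hx.1, by exact_mod_cast hx.2⟩
  simp [f, g, Int.fract, hf]

lemma g_contAt (k : ℤ) (x : ℝ) (hx : (0:ℝ) ≤ x) : ContinuousAt (g k) x := by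
  have hne : (1 + x) ≠ 0 := by linarith
  apply ContinuousAt.mul
  · exact ContinuousAt.div continuousAt_const (continuousAt_const.add continuousAt_id) hne
  · apply continuousAt_const.add
    apply ContinuousAt.div_const
    exact ((continuousAt_id.sub continuousAt_const).mul
      (continuousAt_const.sub (continuousAt_id.sub continuousAt_const)))

/-- The function `f` is continuous on the interval `[0, ∞)`. -/
theorem f_continuousOn : ContinuousOn f (Set.Ici (0 : ℝ)) := by
  intro x hx
  by_cases hxi : ∃ n : ℤ, (n : ℝ) = x
  · obtain ⟨n, rfl⟩ := hxi
    have hn : (0 : ℤ) ≤ n := by exact_mod_cast Set.mem_Ici.mp hx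
    -- right continuity
    have hright : ContinuousWithinAt f (Set.Ici ((n : ℝ))) n := by
      refine ((g_contAt n n hx).continuousWithinAt).congr_of_eventuallyEq ?_ ?_
      · filter_upwards [Ico_mem_nhdsGE_of_mem
          (show (n:ℝ) ∈ Set.Ico (n:ℝ) ((n:ℝ)+1) from ⟨le_refl _, by linarith⟩)] with y hy
        exact f_eq_g n y hy
      · exact f_eq_g n n ⟨le_refl _, by linarith⟩
    rcases eq_or_lt_of_le hn with h0 | h1
    · -- n = 0: Ici 0 within
      have : Set.Ici (0:ℝ) = Set.Ici ((n:ℝ)) := by rw [← h0]; norm_num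
      rw [this]
      exact hright
    · -- n ≥ 1: also left continuity
      have h1' : (1:ℝ) ≤ (n:ℝ) := by exact_mod_cast h1
      have hval : f (n : ℝ) = g (n - 1) (n : ℝ) := by
        simp [f, g, Int.fract]
      have hleft : ContinuousWithinAt f (Set.Iic ((n : ℝ))) n := by
        refine ((g_contAt (n-1) n hx).continuousWithinAt).congr_of_eventuallyEq ?_ hval
        have hmem : Set.Icc ((n:ℝ) - 1) (n:ℝ) ∈ nhdsWithin ((n:ℝ)) (Set.Iic ((n:ℝ))) :=
          Icc_mem_nhdsLE_of_mem (Set.mem_Ioc.mpr ⟨by linarith, le_refl _⟩)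
        filter_upwards [hmem] with y hy
        rcases eq_or_lt_of_le hy.2 with rfl | hlt
        · exact hval
        · have := f_eq_g (n - 1) y (by constructor <;> push_cast <;> linarith [hy.1])
          convert this using 3
        
      have := hleft.union hright
      rw [Set.Iic_union_Ici] at this
      exact this.mono (Set.subset_univ _)
  · -- x is not an integer
    have h1 : ((⌊x⌋ : ℝ)) < x :=
      lt_of_le_of_ne (Int.floor_le x) (fun h => hxi ⟨⌊x⌋, h⟩)
    have h2 : x < (⌊x⌋ : ℝ) + 1 := Int.lt_floor_add_one x
    have hmem : Set.Ioo ((⌊x⌋ : ℝ)) ((⌊x⌋ : ℝ) + 1) ∈ nhds x := Ioo_mem_nhds h1 h2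
    have : ContinuousAt f x := by
      refine (g_contAt ⌊x⌋ x hx).congr ?_
      filter_upwards [hmem] with y hy
      exact (f_eq_g ⌊x⌋ y ⟨hy.1.le, hy.2⟩).symm
    exact this.continuousWithinAt
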